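/- arXiv:2410.05634 — 2 statements merged into one kernel-verified Lean document; each statement's English description precedes it below -/
import Mathlib

section
/- In the standing setup, let U = (u₁,…,u_d) ∈ ℝ^{d₁×d} and V = (v₁,…,v_d) ∈ ℝ^{d₂×d}, and suppose rank(U) = d₁, rank(V) = d₂, R(U) + d₂ ≥ d + 2, and R(V) + d₁ ≥ d + 2. Then rank(Ω) = d(d−1)/2. -/
open Matrix

/-- The flattening of the 4-way array `Ψ(D,F)`: the function on quadruples `(i,j,k,ℓ)` with
value `d_{i,k} f_{j,ℓ} + d_{j,ℓ} f_{i,k} − d_{i,ℓ} f_{j,k} − d_{j,k} f_{i,ℓ}`. -/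
def vecPsi {d₁ d₂ : ℕ} (D F : Matrix (Fin d₁) (Fin d₂) ℝ) :
    Fin d₁ × Fin d₁ × Fin d₂ × Fin d₂ → ℝ :=
  fun q => D q.1 q.2.2.1 * F q.2.1 q.2.2.2 + D q.2.1 q.2.2.2 * F q.1 q.2.2.1
    - D q.1 q.2.2.2 * F q.2.1 q.2.2.1 - D q.2.1 q.2.2.1 * F q.1 q.2.2.2

/-- `maxIndepCols H` is the largest `k ≤ n` such that every set of `k` columns of `H`
is linearly independent (the quantity `R(H)` of the paper). -/
noncomputable def maxIndepCols {m n : ℕ} (H : Matrix (Fin m) (Fin n) ℝ) : ℕ :=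
  sSup {k | k ≤ n ∧ ∀ s : Finset (Fin n), s.card = k →
    LinearIndependent ℝ (fun j : {x // x ∈ s} => Hᵀ j.1)}

section Aux

open Submodule Set

lemma aux_contract2 {n : ℕ} (x y a b : Fin n → ℝ) :
    ∑ k, ∑ l, x k * y l * (a k * b l - a l * b k)
      = (x ⬝ᵥ a) * (y ⬝ᵥ b) - (x ⬝ᵥ b) * (y ⬝ᵥ a) := by
  have h : ∀ k l, x k * y l * (a k * b l - a l * b k)
      = x k * a k * (y l * b l) - x k * b k * (y l * a l) := by intros; ring
  simp only [h, Finset.sum_sub_distrib, ← Finset.mul_sum, ← Finset.sum_mul, dotProduct]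

lemma aux_dual {n : ℕ} {ι : Type*} [Fintype ι] [DecidableEq ι] (w : ι → (Fin n → ℝ))
    (h : LinearIndependent ℝ w) (i₀ : ι) :
    ∃ x : Fin n → ℝ, ∀ i, x ⬝ᵥ w i = if i = i₀ then 1 else 0 := by
  classical
  set p := span ℝ (Set.range w) with hp
  obtain ⟨q, hq⟩ := Submodule.exists_isCompl p
  let b : Module.Basis ι ℝ p := Module.Basis.span h
  let φ : (Fin n → ℝ) →ₗ[ℝ] ℝ := (b.coord i₀).comp (p.linearProjOfIsCompl q hq)
  refine ⟨fun k => φ (fun j => if k = j then 1 else 0), fun i => ?_⟩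
  have h1 : (fun k => φ (fun j => if k = j then 1 else 0)) ⬝ᵥ w i = φ (w i) := by
    rw [LinearMap.pi_apply_eq_sum_univ φ (w i)]
    simp [dotProduct, smul_eq_mul, mul_comm]
  rw [h1]
  have hmem : w i ∈ p := subset_span ⟨i, rfl⟩
  have h2 : (p.linearProjOfIsCompl q hq) (w i) = ⟨w i, hmem⟩ :=
    Submodule.linearProjOfIsCompl_apply_left hq ⟨w i, hmem⟩
  have h3 : (⟨w i, hmem⟩ : p) = b i := by
    apply Subtype.ext
    exact congrArg Subtype.val (Module.Basis.span_apply h i).symm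
  simp only [φ, LinearMap.comp_apply, h2, h3]
  rw [Module.Basis.coord_apply, Module.Basis.repr_self]
  simp [Finsupp.single_apply]

lemma maxIndepCols_zero_mem {m n : ℕ} (H : Matrix (Fin m) (Fin n) ℝ) :
    (0 : ℕ) ∈ {k | k ≤ n ∧ ∀ s : Finset (Fin n), s.card = k →
      LinearIndependent ℝ (fun j : {x // x ∈ s} => Hᵀ j.1)} := by
  refine ⟨Nat.zero_le n, fun s hs => ?_⟩
  have : s = ∅ := Finset.card_eq_zero.mp hs
  subst this
  have : IsEmpty {x // x ∈ (∅ : Finset (Fin n))} := by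
    simp [Finset.notMem_empty, isEmpty_subtype]
  exact linearIndependent_empty_type

lemma maxIndepCols_le {m n : ℕ} (H : Matrix (Fin m) (Fin n) ℝ) : maxIndepCols H ≤ n := by
  apply csSup_le ⟨0, maxIndepCols_zero_mem H⟩ (fun k hk => hk.1)

lemma maxIndepCols_indep {m n : ℕ} (H : Matrix (Fin m) (Fin n) ℝ) {k : ℕ}
    (hk : k ≤ maxIndepCols H) (s : Finset (Fin n)) (hs : s.card = k) :
    LinearIndependent ℝ (fun j : {x // x ∈ s} => Hᵀ j.1) := by
  classical
  set S := {k | k ≤ n ∧ ∀ s : Finset (Fin n), s.card = k →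
    LinearIndependent ℝ (fun j : {x // x ∈ s} => Hᵀ j.1)} with hS
  have hbdd : BddAbove S := ⟨n, fun x hx => hx.1⟩
  have hmem : maxIndepCols H ∈ S := Nat.sSup_mem ⟨0, maxIndepCols_zero_mem H⟩ hbdd
  obtain ⟨t, hst, htcard⟩ : ∃ t, s ⊆ t ∧ t.card = maxIndepCols H := by
    have h1 : s.card ≤ maxIndepCols H := hs ▸ hk
    have h2 : maxIndepCols H ≤ (Finset.univ : Finset (Fin n)).card := by
      simpa using hmem.1
    obtain ⟨t, h, _, hc⟩ := Finset.exists_subsuperset_card_eq s.subset_univ h1 h2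
    exact ⟨t, h, hc⟩
  have hind := hmem.2 t htcard
  exact hind.comp (fun j : {x // x ∈ s} => (⟨j.1, hst j.2⟩ : {x // x ∈ t}))
    (fun a b hab => Subtype.ext (by have h := congrArg Subtype.val hab; exact h))

lemma aux_card_pairs (d : ℕ) :
    Fintype.card {pr : Fin d × Fin d // pr.1 < pr.2} = d * (d - 1) / 2 := by
  have e : {pr : Fin d × Fin d // pr.1 < pr.2} ≃ (Σ j : Fin d, Fin j.val) :=
    { toFun := fun x => ⟨x.1.2, ⟨x.1.1.val, x.2⟩⟩
      invFun := fun x => ⟨(⟨x.2.val, x.2.isLt.trans x.1.isLt⟩, x.1), x.2.isLt⟩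
      left_inv := fun x => by ext <;> simp
      right_inv := fun x => by ext <;> simp }
  rw [Fintype.card_congr e, Fintype.card_sigma]
  simp only [Fintype.card_fin]
  rw [Fin.sum_univ_eq_sum_range (fun i => i) d]
  have := Finset.sum_range_id_mul_two d
  omega

lemma aux_extend {n d : ℕ} (v : Fin d → Fin n → ℝ)
    (hinj : Function.Injective v)
    (hspan : Submodule.span ℝ (Set.range v) = ⊤)
    (s : Finset (Fin d))
    (hs : LinearIndependent ℝ (fun i : {x // x ∈ s} => v i)) :
    ∃ B : Finset (Fin d), s ⊆ B ∧ B.card = n ∧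
      LinearIndependent ℝ (fun i : {x // x ∈ B} => v i) := by
  classical
  have hinjOn : ∀ t : Set (Fin d), Set.InjOn v t := fun t => hinj.injOn
  have hs' : LinearIndependent ℝ ((↑) : (v '' ↑s) → (Fin n → ℝ)) := by
    exact (linearIndepOn_iff_image (hinjOn ↑s)).mp hs
  obtain ⟨b, hbt, hsb, hspanb, hbind⟩ :=
    exists_linearIndepOn_id_extension hs' (Set.image_subset_range v ↑s)
  have hspanb' : span ℝ b = ⊤ := by
    rw [eq_top_iff, ← hspan]
    exact span_le.mpr hspanb
  set B : Finset (Fin d) := Finset.univ.filter (fun i => v i ∈ b) with hB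
  have hvB : v '' ↑B = b := by
    apply Set.Subset.antisymm
    · rintro x ⟨i, hi, rfl⟩
      simpa [hB] using hi
    · intro x hx
      obtain ⟨i, rfl⟩ := hbt hx
      exact ⟨i, by simpa [hB] using hx, rfl⟩
  have hsB : s ⊆ B := by
    intro i hi
    simp only [hB, Finset.mem_filter, Finset.mem_univ, true_and]
    exact hsb ⟨i, by simpa using hi, rfl⟩
  have hindB : LinearIndependent ℝ (fun i : {x // x ∈ B} => v i) := by
    have h2 : LinearIndependent ℝ ((↑) : (v '' (↑B : Set (Fin d))) → (Fin n → ℝ)) := by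
      rw [hvB]; exact hbind
    exact (linearIndepOn_iff_image (hinjOn ↑B)).mpr h2
  refine ⟨B, hsB, ?_, hindB⟩
  have hrange : Set.range (fun i : {x // x ∈ B} => v i) = b := by
    rw [← hvB]
    ext x
    simp [Set.mem_image]
  have h1 : Module.finrank ℝ (span ℝ (Set.range (fun i : {x // x ∈ B} => v i))) =
      Fintype.card {x // x ∈ B} := finrank_span_eq_card hindB
  rw [hrange, hspanb', finrank_top] at h1
  simpa [Module.finrank_pi, Fintype.card_coe] using h1.symm

lemma aux_li {d d₁ d₂ : ℕ} (u : Fin d → Fin d₁ → ℝ) (v : Fin d → Fin d₂ → ℝ)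
    (hd₂d : d₂ ≤ d) (hd₂2 : 2 ≤ d₂)
    (hUind : ∀ s : Finset (Fin d), s.card = d - d₂ + 2 →
      LinearIndependent ℝ (fun i : {x // x ∈ s} => u i))
    (hVpair : ∀ s : Finset (Fin d), s.card = 2 →
      LinearIndependent ℝ (fun i : {x // x ∈ s} => v i))
    (hVspan : Submodule.span ℝ (Set.range v) = ⊤) :
    LinearIndependent ℝ (fun r : {r : Fin d × Fin d // r.1 < r.2} =>
      fun q : Fin d₁ × Fin d₁ × Fin d₂ × Fin d₂ =>
        (u r.1.1 q.1 * u r.1.2 q.2.1 - u r.1.1 q.2.1 * u r.1.2 q.1) *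
        (v r.1.1 q.2.2.1 * v r.1.2 q.2.2.2 - v r.1.1 q.2.2.2 * v r.1.2 q.2.2.1)) := by
  classical
  set P := {r : Fin d × Fin d // r.1 < r.2}
  rw [Fintype.linearIndependent_iff]
  intro lam hsum r₀
  obtain ⟨⟨p, q⟩, hpq⟩ := r₀
  simp only at hpq
  have hvinj : Function.Injective v := by
    intro i j hij
    by_contra hne
    have hcard : ({i, j} : Finset (Fin d)).card = 2 := Finset.card_pair hne
    have hind := hVpair {i, j} hcard
    have h1 : (⟨i, by simp⟩ : {x // x ∈ ({i, j} : Finset (Fin d))}) =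
        ⟨j, by simp⟩ := hind.injective (by simpa using hij)
    exact hne (by simpa using h1)
  have hpqne : p ≠ q := ne_of_lt hpq
  have hpair : LinearIndependent ℝ (fun i : {x // x ∈ ({p, q} : Finset (Fin d))} => v i) :=
    hVpair {p, q} (Finset.card_pair hpqne)
  obtain ⟨B, hsB, hBcard, hBind⟩ := aux_extend v hvinj hVspan {p, q} hpair
  have hpB : p ∈ B := hsB (by simp)
  have hqB : q ∈ B := hsB (by simp)
  set A : Finset (Fin d) := B \ {p, q} with hA
  have hAcard : A.card = d₂ - 2 := by
    rw [hA, Finset.card_sdiff_of_subset (by intro x hx; exact hsB hx)]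
    rw [hBcard, Finset.card_pair hpqne]
  have hpA : p ∉ A := by simp [hA]
  have hqA : q ∉ A := by simp [hA]
  have hAB : A ⊆ B := Finset.sdiff_subset
  obtain ⟨x, hx⟩ := aux_dual (fun i : {x // x ∈ B} => v i) hBind ⟨p, hpB⟩
  obtain ⟨y, hy⟩ := aux_dual (fun i : {x // x ∈ B} => v i) hBind ⟨q, hqB⟩
  have hxv : ∀ i (hi : i ∈ B), x ⬝ᵥ v i = if i = p then 1 else 0 := by
    intro i hi
    have := hx ⟨i, hi⟩
    simpa [Subtype.ext_iff] using this
  have hyv : ∀ i (hi : i ∈ B), y ⬝ᵥ v i = if i = q then 1 else 0 := by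
    intro i hi
    have := hy ⟨i, hi⟩
    simpa [Subtype.ext_iff] using this
  set S : Finset (Fin d) := Finset.univ \ A with hSdef
  have hScard : S.card = d - d₂ + 2 := by
    rw [hSdef, Finset.card_sdiff_of_subset (Finset.subset_univ A), Finset.card_univ, Fintype.card_fin,
      hAcard]
    omega
  have hSind := hUind S hScard
  have hpS : p ∈ S := by simp [hSdef, hpA]
  have hqS : q ∈ S := by simp [hSdef, hqA]
  obtain ⟨z, hz⟩ := aux_dual (fun i : {x // x ∈ S} => u i) hSind ⟨p, hpS⟩
  obtain ⟨w, hw⟩ := aux_dual (fun i : {x // x ∈ S} => u i) hSind ⟨q, hqS⟩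
  have hzu : ∀ i (hi : i ∈ S), z ⬝ᵥ u i = if i = p then 1 else 0 := by
    intro i hi; simpa [Subtype.ext_iff] using hz ⟨i, hi⟩
  have hwu : ∀ i (hi : i ∈ S), w ⬝ᵥ u i = if i = q then 1 else 0 := by
    intro i hi; simpa [Subtype.ext_iff] using hw ⟨i, hi⟩
  have h0 : ∀ (a b : Fin d₁) (k l : Fin d₂),
      (∑ r : P, lam r * ((u r.1.1 a * u r.1.2 b - u r.1.1 b * u r.1.2 a) *
        (v r.1.1 k * v r.1.2 l - v r.1.1 l * v r.1.2 k))) = 0 := by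
    intro a b k l
    have := congrFun hsum (a, b, k, l)
    simpa [Finset.sum_apply] using this
  set m : P → ℝ := fun r => (x ⬝ᵥ v r.1.1) * (y ⬝ᵥ v r.1.2) - (x ⬝ᵥ v r.1.2) * (y ⬝ᵥ v r.1.1)
    with hm
  have T1 : ∀ (a b : Fin d₁),
      (∑ r : P, (lam r * m r) * (u r.1.1 a * u r.1.2 b - u r.1.1 b * u r.1.2 a)) = 0 := by
    intro a b
    have h2 : (∑ k, ∑ l, x k * y l * (∑ r : P, lam r *
        ((u r.1.1 a * u r.1.2 b - u r.1.1 b * u r.1.2 a) *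
         (v r.1.1 k * v r.1.2 l - v r.1.1 l * v r.1.2 k)))) = 0 := by
      simp [h0]
    calc (∑ r : P, (lam r * m r) * (u r.1.1 a * u r.1.2 b - u r.1.1 b * u r.1.2 a))
        = ∑ r : P, ∑ k, ∑ l, x k * y l * (lam r *
          ((u r.1.1 a * u r.1.2 b - u r.1.1 b * u r.1.2 a) *
           (v r.1.1 k * v r.1.2 l - v r.1.1 l * v r.1.2 k))) := by
          refine Finset.sum_congr rfl fun r _ => ?_
          have := aux_contract2 x y (v r.1.1) (v r.1.2)
          calc (lam r * m r) * (u r.1.1 a * u r.1.2 b - u r.1.1 b * u r.1.2 a)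
              = (lam r * (u r.1.1 a * u r.1.2 b - u r.1.1 b * u r.1.2 a)) *
                (∑ k, ∑ l, x k * y l * (v r.1.1 k * v r.1.2 l - v r.1.1 l * v r.1.2 k)) := by
                rw [this, hm]; ring
            _ = ∑ k, ∑ l, x k * y l * (lam r *
                ((u r.1.1 a * u r.1.2 b - u r.1.1 b * u r.1.2 a) *
                 (v r.1.1 k * v r.1.2 l - v r.1.1 l * v r.1.2 k))) := by
                rw [Finset.mul_sum]
                refine Finset.sum_congr rfl fun k _ => ?_
                rw [Finset.mul_sum]
                refine Finset.sum_congr rfl fun l _ => ?_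
                ring
      _ = ∑ k, ∑ l, ∑ r : P, x k * y l * (lam r *
          ((u r.1.1 a * u r.1.2 b - u r.1.1 b * u r.1.2 a) *
           (v r.1.1 k * v r.1.2 l - v r.1.1 l * v r.1.2 k))) := by
          rw [Finset.sum_comm]
          refine Finset.sum_congr rfl fun k _ => ?_
          rw [Finset.sum_comm]
      _ = 0 := by
          rw [← h2]
          refine Finset.sum_congr rfl fun k _ => Finset.sum_congr rfl fun l _ => ?_
          rw [Finset.mul_sum]
  set nn : P → ℝ := fun r => (z ⬝ᵥ u r.1.1) * (w ⬝ᵥ u r.1.2) - (z ⬝ᵥ u r.1.2) * (w ⬝ᵥ u r.1.1)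
    with hnn
  have T2 : (∑ r : P, (lam r * m r) * nn r) = 0 := by
    have h2 : (∑ a, ∑ b, z a * w b * (∑ r : P, (lam r * m r) *
        (u r.1.1 a * u r.1.2 b - u r.1.1 b * u r.1.2 a))) = 0 := by
      simp [T1]
    calc (∑ r : P, (lam r * m r) * nn r)
        = ∑ r : P, ∑ a, ∑ b, z a * w b * ((lam r * m r) *
          (u r.1.1 a * u r.1.2 b - u r.1.1 b * u r.1.2 a)) := by
          refine Finset.sum_congr rfl fun r _ => ?_
          simp only [hnn]
          rw [← aux_contract2 z w (u r.1.1) (u r.1.2), Finset.mul_sum]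
          refine Finset.sum_congr rfl fun a _ => ?_
          rw [Finset.mul_sum]
          refine Finset.sum_congr rfl fun b _ => ?_
          ring
      _ = ∑ a, ∑ b, ∑ r : P, z a * w b * ((lam r * m r) *
          (u r.1.1 a * u r.1.2 b - u r.1.1 b * u r.1.2 a)) := by
          rw [Finset.sum_comm]
          refine Finset.sum_congr rfl fun a _ => ?_
          rw [Finset.sum_comm]
      _ = 0 := by
          rw [← h2]
          refine Finset.sum_congr rfl fun a _ => Finset.sum_congr rfl fun b _ => ?_
          rw [Finset.mul_sum]
  have hmA : ∀ r : P, (r.1.1 ∈ A ∨ r.1.2 ∈ A) → m r = 0 := by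
    intro r hr
    have hz0 : ∀ i, i ∈ A → (x ⬝ᵥ v i = 0 ∧ y ⬝ᵥ v i = 0) := by
      intro i hi
      have hiB : i ∈ B := hAB hi
      have hip : i ≠ p := fun h => hpA (h ▸ hi)
      have hiq : i ≠ q := fun h => hqA (h ▸ hi)
      exact ⟨by rw [hxv i hiB]; simp [hip], by rw [hyv i hiB]; simp [hiq]⟩
    rcases hr with hr | hr
    · obtain ⟨e1, e2⟩ := hz0 _ hr
      rw [hm]; simp only [e1, e2]; ring
    · obtain ⟨e1, e2⟩ := hz0 _ hr
      rw [hm]; simp only [e1, e2]; ring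
  have hr₀ : (⟨(p, q), hpq⟩ : P) ∈ (Finset.univ : Finset P) := Finset.mem_univ _
  have hsingle : (∑ r : P, (lam r * m r) * nn r) = (lam ⟨(p, q), hpq⟩ * m ⟨(p, q), hpq⟩) *
      nn ⟨(p, q), hpq⟩ := by
    refine Finset.sum_eq_single_of_mem _ hr₀ ?_
    intro r _ hrne
    by_cases hA1 : r.1.1 ∈ A
    · rw [hmA r (Or.inl hA1)]; ring
    by_cases hA2 : r.1.2 ∈ A
    · rw [hmA r (Or.inr hA2)]; ring
    · have h1S : r.1.1 ∈ S := by simp [hSdef, hA1]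
      have h2S : r.1.2 ∈ S := by simp [hSdef, hA2]
      have e1 := hzu _ h1S
      have e2 := hwu _ h2S
      have e3 := hzu _ h2S
      have e4 := hwu _ h1S
      have hne : ¬(r.1.1 = p ∧ r.1.2 = q) := by
        intro ⟨ha, hb⟩
        apply hrne
        apply Subtype.ext
        exact Prod.ext ha hb
      have hne2 : ¬(r.1.1 = q ∧ r.1.2 = p) := by
        intro ⟨ha, hb⟩
        have := r.2
        rw [ha, hb] at this
        exact absurd hpq (not_lt.mpr (le_of_lt this))
      have t1 : (if r.1.1 = p then (1:ℝ) else 0) * (if r.1.2 = q then (1:ℝ) else 0) = 0 := by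
        by_cases c1 : r.1.1 = p
        · by_cases c2 : r.1.2 = q
          · exact absurd ⟨c1, c2⟩ hne
          · simp [c2]
        · simp [c1]
      have t2 : (if r.1.2 = p then (1:ℝ) else 0) * (if r.1.1 = q then (1:ℝ) else 0) = 0 := by
        by_cases c3 : r.1.2 = p
        · by_cases c4 : r.1.1 = q
          · exact absurd ⟨c4, c3⟩ hne2
          · simp [c4]
        · simp [c3]
      have hnn0 : nn r = 0 := by
        simp only [hnn, e1, e2, e3, e4, t1, t2]
        ring
      rw [hnn0]; ring
  have hmval : m ⟨(p, q), hpq⟩ = 1 := by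
    rw [hm]
    simp only
    rw [hxv p hpB, hyv q hqB, hxv q hqB, hyv p hpB]
    simp [hpqne, hpqne.symm]
  have hnval : nn ⟨(p, q), hpq⟩ = 1 := by
    rw [hnn]
    simp only
    rw [hzu p hpS, hwu q hqS, hzu q hqS, hwu p hpS]
    simp [hpqne, hpqne.symm]
  rw [hsingle, hmval, hnval] at T2
  simpa using T2

lemma vecPsi_bilin {d d₁ d₂ : ℕ} (c e : Fin d → ℝ)
    (D F : Fin d → Matrix (Fin d₁) (Fin d₂) ℝ) (q : Fin d₁ × Fin d₁ × Fin d₂ × Fin d₂) :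
    vecPsi (∑ a, c a • D a) (∑ b, e b • F b) q
      = ∑ a, ∑ b, c a * e b * vecPsi (D a) (F b) q := by
  simp only [vecPsi, Matrix.sum_apply, Matrix.smul_apply, smul_eq_mul, Finset.sum_mul_sum]
  simp only [← Finset.sum_add_distrib, ← Finset.sum_sub_distrib]
  exact Finset.sum_congr rfl fun a _ => Finset.sum_congr rfl fun b _ => by ring

lemma vecPsi_symm {d₁ d₂ : ℕ} (D F : Matrix (Fin d₁) (Fin d₂) ℝ) :
    vecPsi D F = vecPsi F D := by
  funext q; simp only [vecPsi]; ring

lemma vecPsi_rank_one {d₁ d₂ : ℕ} (u₁ u₂ : Fin d₁ → ℝ) (v₁ v₂ : Fin d₂ → ℝ)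
    (q : Fin d₁ × Fin d₁ × Fin d₂ × Fin d₂) :
    vecPsi (vecMulVec u₁ v₁) (vecMulVec u₂ v₂) q
      = (u₁ q.1 * u₂ q.2.1 - u₁ q.2.1 * u₂ q.1) *
        (v₁ q.2.2.1 * v₂ q.2.2.2 - v₁ q.2.2.2 * v₂ q.2.2.1) := by
  simp only [vecPsi, vecMulVec_apply]; ring

end Aux

theorem stmt8 (d d₁ d₂ : ℕ) (hd : 2 ≤ d) (hd₁ : 1 ≤ d₁) (hd₂ : 1 ≤ d₂)
    (u : Fin d → Fin d₁ → ℝ) (v : Fin d → Fin d₂ → ℝ)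
    (hu : ∀ ℓ, u ℓ ⬝ᵥ u ℓ = 1) (hv : ∀ ℓ, v ℓ ⬝ᵥ v ℓ = 1)
    (hli : LinearIndependent ℝ
      (fun ℓ : Fin d => fun pr : Fin d₂ × Fin d₁ => v ℓ pr.1 * u ℓ pr.2))
    (Θ : Matrix (Fin d) (Fin d) ℝ) (hΘ : IsUnit Θ.det)
    (W : Fin d → Matrix (Fin d₁) (Fin d₂) ℝ)
    (hW : ∀ ℓ, W ℓ = ∑ i, Θ⁻¹ i ℓ • Matrix.vecMulVec (u i) (v i))
    (Ω : Matrix (Fin d₁ × Fin d₁ × Fin d₂ × Fin d₂) {pr : Fin d × Fin d // pr.1 ≤ pr.2} ℝ)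
    (hΩ : ∀ idx pr, Ω idx pr = vecPsi (W pr.val.1) (W pr.val.2) idx)
    (U : Matrix (Fin d₁) (Fin d) ℝ) (hUdef : U = Matrix.of fun i ℓ => u ℓ i)
    (V : Matrix (Fin d₂) (Fin d) ℝ) (hVdef : V = Matrix.of fun i ℓ => v ℓ i)
    (hU : U.rank = d₁) (hV : V.rank = d₂)
    (hRU : maxIndepCols U + d₂ ≥ d + 2) (hRV : maxIndepCols V + d₁ ≥ d + 2) :
    Ω.rank = d * (d - 1) / 2 := by
  classical
  have hUT : Uᵀ = u := by
    funext ℓ i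
    simp [hUdef]
  have hVT : Vᵀ = v := by
    funext ℓ i
    simp [hVdef]
  have hd₁d : d₁ ≤ d := by
    have := U.rank_le_card_width
    rw [hU] at this
    simpa using this
  have hd₂d : d₂ ≤ d := by
    have := V.rank_le_card_width
    rw [hV] at this
    simpa using this
  have hmU_le : maxIndepCols U ≤ d := maxIndepCols_le U
  have hmV_le : maxIndepCols V ≤ d := maxIndepCols_le V
  have hd₂2 : 2 ≤ d₂ := by omega
  have hd₁2 : 2 ≤ d₁ := by omega
  have hUind : ∀ s : Finset (Fin d), s.card = d - d₂ + 2 →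
      LinearIndependent ℝ (fun i : {x // x ∈ s} => u i) := by
    intro s hs
    have h := maxIndepCols_indep U (k := d - d₂ + 2) (by omega) s hs
    rwa [hUT] at h
  have hVpair : ∀ s : Finset (Fin d), s.card = 2 →
      LinearIndependent ℝ (fun i : {x // x ∈ s} => v i) := by
    intro s hs
    have h := maxIndepCols_indep V (k := 2) (by omega) s hs
    rwa [hVT] at h
  have hVspan : Submodule.span ℝ (Set.range v) = ⊤ := by
    have h1 := V.rank_eq_finrank_span_cols
    rw [hV, show V.col = Vᵀ from rfl, hVT] at h1
    apply Submodule.eq_top_of_finrank_eq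
    rw [← h1]
    simp [Module.finrank_pi]
  have hli2 := aux_li u v hd₂d hd₂2 hUind hVpair hVspan
  -- the wedge functions
  set gU : Fin d → Fin d → (Fin d₁ × Fin d₁ × Fin d₂ × Fin d₂) → ℝ :=
    fun i j q => (u i q.1 * u j q.2.1 - u i q.2.1 * u j q.1) *
      (v i q.2.2.1 * v j q.2.2.2 - v i q.2.2.2 * v j q.2.2.1) with hgU
  have hli3 : LinearIndependent ℝ
      (fun r : {r : Fin d × Fin d // r.1 < r.2} => gU r.1.1 r.1.2) := hli2
  set C : Fin d → Matrix (Fin d₁) (Fin d₂) ℝ := fun i => vecMulVec (u i) (v i) with hC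
  have hgUC : ∀ i j, (fun q => vecPsi (C i) (C j) q) = gU i j := by
    intro i j
    funext q
    rw [hgU, hC]
    exact vecPsi_rank_one (u i) (u j) (v i) (v j) q
  have hΘinv : Θ⁻¹ * Θ = 1 := nonsing_inv_mul Θ hΘ
  have hCW : ∀ p, C p = ∑ a, Θ a p • W a := by
    intro p
    symm
    have e1 : (∑ a, Θ a p • W a) = ∑ a, ∑ i, (Θ⁻¹ i a * Θ a p) • C i := by
      refine Finset.sum_congr rfl fun a _ => ?_
      rw [hW a, Finset.smul_sum]
      refine Finset.sum_congr rfl fun i _ => ?_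
      rw [smul_smul, mul_comm]
    rw [e1, Finset.sum_comm]
    have e2 : ∀ i : Fin d, (∑ a, (Θ⁻¹ i a * Θ a p) • C i) = ((Θ⁻¹ * Θ) i p) • C i := by
      intro i
      rw [← Finset.sum_smul, Matrix.mul_apply]
    simp only [e2, hΘinv, Matrix.one_apply]
    simp [ite_smul]
  -- span equality
  have hspan_eq : Submodule.span ℝ (Set.range Ωᵀ)
      = Submodule.span ℝ (Set.range
          (fun r : {r : Fin d × Fin d // r.1 < r.2} => gU r.1.1 r.1.2)) := by
    apply le_antisymm
    · rw [Submodule.span_le]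
      rintro _ ⟨r, rfl⟩
      have hcol : Ωᵀ r = fun q => vecPsi (W r.1.1) (W r.1.2) q := by
        funext q
        exact hΩ q r
      rw [hcol]
      have hexp : (fun q => vecPsi (W r.1.1) (W r.1.2) q)
          = ∑ i, ∑ j, (Θ⁻¹ i r.1.1 * Θ⁻¹ j r.1.2) • gU i j := by
        funext q
        rw [hW r.1.1, hW r.1.2]
        rw [show (∑ i, Θ⁻¹ i r.1.1 • Matrix.vecMulVec (u i) (v i))
            = ∑ i, Θ⁻¹ i r.1.1 • C i from rfl,
          show (∑ j, Θ⁻¹ j r.1.2 • Matrix.vecMulVec (u j) (v j))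
            = ∑ j, Θ⁻¹ j r.1.2 • C j from rfl]
        rw [vecPsi_bilin]
        simp only [Finset.sum_apply, Pi.smul_apply, smul_eq_mul]
        refine Finset.sum_congr rfl fun i _ => Finset.sum_congr rfl fun j _ => ?_
        rw [← hgUC i j]
      rw [hexp]
      refine Submodule.sum_mem _ fun i _ => Submodule.sum_mem _ fun j _ =>
        Submodule.smul_mem _ _ ?_
      rcases lt_trichotomy i j with h | h | h
      · exact Submodule.subset_span ⟨⟨(i, j), h⟩, rfl⟩
      · subst h
        have hz : gU i i = 0 := by
          funext q
          rw [hgU]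
          simp only [Pi.zero_apply]
          ring
        rw [hz]
        exact Submodule.zero_mem _
      · have hsymmg : gU i j = gU j i := by
          funext q
          rw [hgU]
          simp only
          ring
        rw [hsymmg]
        exact Submodule.subset_span ⟨⟨(j, i), h⟩, rfl⟩
    · rw [Submodule.span_le]
      rintro _ ⟨r, rfl⟩
      have hexp : gU r.1.1 r.1.2
          = ∑ a, ∑ b, (Θ a r.1.1 * Θ b r.1.2) • (fun q => vecPsi (W a) (W b) q) := by
        funext q
        rw [← hgUC, hCW r.1.1, hCW r.1.2]
        beta_reduce
        rw [vecPsi_bilin]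
        simp only [Finset.sum_apply, Pi.smul_apply, smul_eq_mul]
      show gU r.1.1 r.1.2 ∈ _
      rw [hexp]
      refine Submodule.sum_mem _ fun a _ => Submodule.sum_mem _ fun b _ =>
        Submodule.smul_mem _ _ ?_
      rcases le_or_gt a b with h | h
      · have : (fun q => vecPsi (W a) (W b) q) = Ωᵀ ⟨(a, b), h⟩ := by
          funext q
          exact (hΩ q ⟨(a, b), h⟩).symm
        rw [this]
        exact Submodule.subset_span ⟨_, rfl⟩
      · have : (fun q => vecPsi (W a) (W b) q) = Ωᵀ ⟨(b, a), le_of_lt h⟩ := by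
          funext q
          rw [vecPsi_symm]
          exact (hΩ q ⟨(b, a), le_of_lt h⟩).symm
        rw [this]
        exact Submodule.subset_span ⟨_, rfl⟩
  rw [Matrix.rank_eq_finrank_span_cols, show Ω.col = Ωᵀ from rfl, hspan_eq, finrank_span_eq_card hli3,
    aux_card_pairs]
end

section
/- In the standing setup, suppose additionally that every column of Θ has Euclidean norm 1 and that rank(Ω) = d(d−1)/2 (so that ker(Ω) ⊂ ℝ^{d(d+1)/2} has dimension d). Let h₁,…,h_d be any basis of ker(Ω), and for each m let H_m be the symmetric d×d matrix associated with h_m. Then: (a) Θ⁻¹ H_m (Θ⁻¹)ᵀ is a diagonal matrix for every m ∈ {1,…,d}; and (b) if Θ' is any invertible d×d real matrix whose columns have Euclidean norm 1 such that (Θ')⁻¹ H_m ((Θ')⁻¹)ᵀ is diagonal for every m ∈ {1,…,d}, then there exist a permutation σ of {1,…,d} and signs κ₁,…,κ_d ∈ {−1, 1} such that the σ(ℓ)-th column of Θ' equals κ_ℓ times the ℓ-th column of Θ for every ℓ. In particular, the matrix Θ recovered this way does not depend on the choice of basis of ker(Ω). -/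
open Matrix

/-- The symmetric `d × d` matrix associated with a vector
`h = (h_{1,1},…,h_{1,d},h_{2,2},…,h_{d,d})ᵀ ∈ ℝ^{d(d+1)/2}`: diagonal entries `h_{i,i}`,
off-diagonal entries `h_{i,j}/2` for `i < j`. -/
noncomputable def symOf {d : ℕ} (h : {pr : Fin d × Fin d // pr.1 ≤ pr.2} → ℝ) :
    Matrix (Fin d) (Fin d) ℝ :=
  Matrix.of fun i j =>
    if hlt : i < j then h ⟨(i, j), le_of_lt hlt⟩ / 2
    else if hgt : j < i then h ⟨(j, i), le_of_lt hgt⟩ / 2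
    else h ⟨(i, j), not_lt.mp hgt⟩

lemma vecPsi_comm {d₁ d₂ : ℕ} (D F : Matrix (Fin d₁) (Fin d₂) ℝ) (q) :
    vecPsi D F q = vecPsi F D q := by
  simp [vecPsi]; ring

lemma vecPsi_self {d₁ d₂ : ℕ} (a : Fin d₁ → ℝ) (c : Fin d₂ → ℝ) (q) :
    vecPsi (vecMulVec a c) (vecMulVec a c) q = 0 := by
  simp [vecPsi, vecMulVec_apply]; ring

lemma vecPsi_sum {d d₁ d₂ : ℕ} (x y : Fin d → ℝ) (M N : Fin d → Matrix (Fin d₁) (Fin d₂) ℝ) (q) :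
    vecPsi (∑ a, x a • M a) (∑ b, y b • N b) q
      = ∑ a, ∑ b, x a * y b * vecPsi (M a) (N b) q := by
  simp only [vecPsi, Matrix.sum_apply, Matrix.smul_apply, smul_eq_mul, Finset.sum_mul_sum]
  rw [← Finset.sum_add_distrib, ← Finset.sum_sub_distrib, ← Finset.sum_sub_distrib]
  refine Finset.sum_congr rfl fun a _ => ?_
  rw [← Finset.sum_add_distrib, ← Finset.sum_sub_distrib, ← Finset.sum_sub_distrib]
  refine Finset.sum_congr rfl fun b _ => ?_
  ring

def toVec {d : ℕ} (S : Matrix (Fin d) (Fin d) ℝ) : {pr : Fin d × Fin d // pr.1 ≤ pr.2} → ℝ :=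
  fun pr => if pr.1.1 = pr.1.2 then S pr.1.1 pr.1.2 else 2 * S pr.1.1 pr.1.2

lemma symOf_toVec {d : ℕ} (S : Matrix (Fin d) (Fin d) ℝ) (hS : ∀ i j, S i j = S j i) :
    symOf (toVec S) = S := by
  ext i j
  simp only [symOf, toVec, Matrix.of_apply]
  rcases lt_trichotomy i j with hij | hij | hij
  · rw [dif_pos hij, if_neg (ne_of_lt hij)]; ring
  · subst hij; rw [dif_neg (lt_irrefl i), dif_neg (lt_irrefl i), if_pos rfl]
  · rw [dif_neg (lt_asymm hij), dif_pos hij, if_neg (ne_of_lt hij), hS j i]; ring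

lemma sum_subtype_eq {d : ℕ} (S : Matrix (Fin d) (Fin d) ℝ) (hS : ∀ i j, S i j = S j i)
    (g : Fin d → Fin d → ℝ) (hg : ∀ i j, g i j = g j i) :
    ∑ pr : {pr : Fin d × Fin d // pr.1 ≤ pr.2}, toVec S pr * g pr.1.1 pr.1.2
      = ∑ i, ∑ j, S i j * g i j := by
  classical
  set f : Fin d × Fin d → ℝ := fun p =>
    (if p.1 = p.2 then S p.1 p.2 else 2 * S p.1 p.2) * g p.1 p.2 with hf
  have e1 : ∑ pr : {pr : Fin d × Fin d // pr.1 ≤ pr.2}, toVec S pr * g pr.1.1 pr.1.2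
      = ∑ p ∈ Finset.univ.filter (fun p : Fin d × Fin d => p.1 ≤ p.2), f p := by
    rw [Finset.sum_subtype (p := fun p : Fin d × Fin d => p.1 ≤ p.2)
      (Finset.univ.filter (fun p : Fin d × Fin d => p.1 ≤ p.2)) (by simp) f]
    rfl
  have eswap : ∑ p ∈ Finset.univ.filter (fun p : Fin d × Fin d => p.2 < p.1),
        S p.1 p.2 * g p.1 p.2
      = ∑ p ∈ Finset.univ.filter (fun p : Fin d × Fin d => p.1 < p.2),
        S p.1 p.2 * g p.1 p.2 := by
    refine Finset.sum_nbij' (fun p => Prod.swap p) (fun p => Prod.swap p) ?_ ?_ ?_ ?_ ?_ <;>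
      simp +contextual
    intro a b _
    rw [hS b a, hg b a]
  have hfp : ∀ p : Fin d × Fin d, f p = S p.1 p.2 * g p.1 p.2 +
      (if p.1 ≠ p.2 then S p.1 p.2 * g p.1 p.2 else 0) := by
    intro p
    by_cases hp : p.1 = p.2 <;> simp [hf, hp] <;> ring
  have efilt : (Finset.univ.filter (fun p : Fin d × Fin d => p.1 ≤ p.2)).filter
        (fun p => p.1 ≠ p.2)
      = Finset.univ.filter (fun p : Fin d × Fin d => p.1 < p.2) := by
    rw [Finset.filter_filter]
    exact Finset.filter_congr (fun p _ => by rw [lt_iff_le_and_ne])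
  have e2 : ∑ p ∈ Finset.univ.filter (fun p : Fin d × Fin d => p.1 ≤ p.2), f p
      = ∑ p ∈ Finset.univ.filter (fun p : Fin d × Fin d => p.1 ≤ p.2), S p.1 p.2 * g p.1 p.2
        + ∑ p ∈ Finset.univ.filter (fun p : Fin d × Fin d => p.1 < p.2),
            S p.1 p.2 * g p.1 p.2 := by
    rw [Finset.sum_congr rfl (fun p _ => hfp p), Finset.sum_add_distrib, ← efilt,
      ← Finset.sum_filter]
  have e3 : ∑ i, ∑ j, S i j * g i j
      = ∑ p ∈ Finset.univ.filter (fun p : Fin d × Fin d => p.1 ≤ p.2), S p.1 p.2 * g p.1 p.2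
        + ∑ p ∈ Finset.univ.filter (fun p : Fin d × Fin d => p.2 < p.1),
            S p.1 p.2 * g p.1 p.2 := by
    rw [show (∑ i, ∑ j, S i j * g i j) = ∑ p : Fin d × Fin d, S p.1 p.2 * g p.1 p.2 from
      (Fintype.sum_prod_type (f := fun p : Fin d × Fin d => S p.1 p.2 * g p.1 p.2)).symm]
    rw [← Finset.sum_filter_add_sum_filter_not Finset.univ
      (fun p : Fin d × Fin d => p.1 ≤ p.2) (fun p => S p.1 p.2 * g p.1 p.2)]
    congr 1
    exact Finset.sum_congr (Finset.filter_congr (fun p _ => by rw [not_le])) (fun _ _ => rfl)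
  rw [e1, e2, e3, eswap]

lemma card_pairs (d : ℕ) :
    Fintype.card {pr : Fin d × Fin d // pr.1 ≤ pr.2} = d * (d - 1) / 2 + d := by
  classical
  rw [Fintype.card_subtype]
  rw [Finset.card_filter]
  rw [show (∑ p : Fin d × Fin d, if p.1 ≤ p.2 then 1 else 0)
      = ∑ i : Fin d, ∑ j : Fin d, (if i ≤ j then 1 else 0) from
    Fintype.sum_prod_type (f := fun p : Fin d × Fin d => if p.1 ≤ p.2 then (1:ℕ) else 0)]
  have : ∀ i : Fin d, (∑ j : Fin d, if i ≤ j then (1:ℕ) else 0) = d - i.val := by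
    intro i
    rw [← Finset.card_filter]
    have : Finset.univ.filter (fun j : Fin d => i ≤ j) = Finset.Ici i := by
      ext j; simp
    rw [this, Fin.card_Ici]
  rw [Finset.sum_congr rfl (fun i _ => this i)]
  rw [Fin.sum_univ_eq_sum_range (fun k => d - k)]
  rw [← Finset.sum_range_reflect]
  have : ∀ j ∈ Finset.range d, d - (d - 1 - j) = j + 1 := by
    intro j hj; have := Finset.mem_range.mp hj; omega
  rw [Finset.sum_congr rfl this, Finset.sum_add_distrib, Finset.sum_range_id,
    Finset.sum_const, Finset.card_range, smul_eq_mul, mul_one]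

lemma sum_comm4 {M : Type*} [AddCommMonoid M] {α : Type*} [Fintype α] (f : α → α → α → α → M) :
    ∑ a, ∑ b, ∑ i, ∑ j, f a b i j = ∑ i, ∑ j, ∑ a, ∑ b, f a b i j := by
  have h1 : ∀ a, (∑ b, ∑ i, ∑ j, f a b i j) = ∑ i, ∑ j, ∑ b, f a b i j := by
    intro a
    rw [Finset.sum_comm]
    exact Finset.sum_congr rfl fun i _ => Finset.sum_comm
  rw [Finset.sum_congr rfl fun a _ => h1 a, Finset.sum_comm]
  exact Finset.sum_congr rfl fun i _ => Finset.sum_comm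

lemma symOf_sum {d n : ℕ} (a : Fin n → ℝ) (x : Fin n → ({pr : Fin d × Fin d // pr.1 ≤ pr.2} → ℝ)) :
    symOf (∑ m, a m • x m) = ∑ m, a m • symOf (x m) := by
  ext i j
  simp only [symOf, Matrix.of_apply, Matrix.sum_apply, Matrix.smul_apply, Finset.sum_apply,
    Pi.smul_apply, smul_eq_mul]
  split_ifs <;> simp [Finset.sum_div, mul_div_assoc]

theorem stmt11 (d d₁ d₂ : ℕ) (hd : 2 ≤ d) (hd₁ : 1 ≤ d₁) (hd₂ : 1 ≤ d₂)
    (u : Fin d → Fin d₁ → ℝ) (v : Fin d → Fin d₂ → ℝ)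
    (hu : ∀ ℓ, u ℓ ⬝ᵥ u ℓ = 1) (hv : ∀ ℓ, v ℓ ⬝ᵥ v ℓ = 1)
    (hli : LinearIndependent ℝ
      (fun ℓ : Fin d => fun pr : Fin d₂ × Fin d₁ => v ℓ pr.1 * u ℓ pr.2))
    (Θ : Matrix (Fin d) (Fin d) ℝ) (hΘ : IsUnit Θ.det)
    (hΘcol : ∀ ℓ, ∑ i, Θ i ℓ ^ 2 = 1)
    (W : Fin d → Matrix (Fin d₁) (Fin d₂) ℝ)
    (hW : ∀ ℓ, W ℓ = ∑ i, Θ⁻¹ i ℓ • Matrix.vecMulVec (u i) (v i))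
    (Ω : Matrix (Fin d₁ × Fin d₁ × Fin d₂ × Fin d₂) {pr : Fin d × Fin d // pr.1 ≤ pr.2} ℝ)
    (hΩ : ∀ idx pr, Ω idx pr = vecPsi (W pr.val.1) (W pr.val.2) idx)
    (hrank : Ω.rank = d * (d - 1) / 2)
    (h : Fin d → ({pr : Fin d × Fin d // pr.1 ≤ pr.2} → ℝ))
    (hbasis : LinearIndependent ℝ h)
    (hspan : Submodule.span ℝ (Set.range h) = LinearMap.ker Ω.mulVecLin) :
    (∀ m, Matrix.IsDiag (Θ⁻¹ * symOf (h m) * (Θ⁻¹)ᵀ)) ∧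
    ∀ Θ' : Matrix (Fin d) (Fin d) ℝ, IsUnit Θ'.det →
      (∀ ℓ, ∑ i, Θ' i ℓ ^ 2 = 1) →
      (∀ m, Matrix.IsDiag (Θ'⁻¹ * symOf (h m) * (Θ'⁻¹)ᵀ)) →
      ∃ (σ : Equiv.Perm (Fin d)) (κ : Fin d → ℝ),
        (∀ ℓ, κ ℓ = 1 ∨ κ ℓ = -1) ∧ ∀ ℓ i, Θ' i (σ ℓ) = κ ℓ * Θ i ℓ := by
  classical
  -- symmetry of the conjugated matrices
  have hsym : ∀ c : Fin d → ℝ, ∀ i j,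
      (Θ * Matrix.diagonal c * Θᵀ) i j = (Θ * Matrix.diagonal c * Θᵀ) j i := by
    intro c i j
    have ht : (Θ * Matrix.diagonal c * Θᵀ)ᵀ = Θ * Matrix.diagonal c * Θᵀ := by
      rw [Matrix.transpose_mul, Matrix.transpose_mul, Matrix.transpose_transpose,
        Matrix.diagonal_transpose, Matrix.mul_assoc]
    exact (congrFun (congrFun ht j) i).symm ▸ rfl
  have hΘinv : Θ⁻¹ * Θ = 1 := Matrix.nonsing_inv_mul Θ hΘ
  have hconj : ∀ c : Fin d → ℝ,
      Θ⁻¹ * (Θ * Matrix.diagonal c * Θᵀ) * (Θ⁻¹)ᵀ = Matrix.diagonal c := by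
    intro c
    have h2 : Θᵀ * (Θ⁻¹)ᵀ = 1 := by
      rw [← Matrix.transpose_mul, hΘinv, Matrix.transpose_one]
    calc Θ⁻¹ * (Θ * Matrix.diagonal c * Θᵀ) * (Θ⁻¹)ᵀ
        = (Θ⁻¹ * Θ) * Matrix.diagonal c * (Θᵀ * (Θ⁻¹)ᵀ) := by
          simp only [Matrix.mul_assoc]
      _ = Matrix.diagonal c := by rw [hΘinv, h2, Matrix.one_mul, Matrix.mul_one]
  -- the linear map c ↦ toVec (Θ diag(c) Θᵀ)
  set Smap : (Fin d → ℝ) →ₗ[ℝ] ({pr : Fin d × Fin d // pr.1 ≤ pr.2} → ℝ) :=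
    { toFun := fun c => toVec (Θ * Matrix.diagonal c * Θᵀ)
      map_add' := by
        intro c c'
        funext pr
        have hD : Matrix.diagonal (c + c') = Matrix.diagonal c + Matrix.diagonal c' := by
          ext i j; by_cases hij : i = j <;> simp [Matrix.diagonal_apply, hij]
        have : Θ * Matrix.diagonal (c + c') * Θᵀ
            = Θ * Matrix.diagonal c * Θᵀ + Θ * Matrix.diagonal c' * Θᵀ := by
          rw [hD, Matrix.mul_add, Matrix.add_mul]
        show toVec (Θ * Matrix.diagonal (c + c') * Θᵀ) pr
          = toVec (Θ * Matrix.diagonal c * Θᵀ) pr + toVec (Θ * Matrix.diagonal c' * Θᵀ) pr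
        rw [this]
        simp only [toVec, Matrix.add_apply]
        split_ifs <;> ring
      map_smul' := by
        intro r c
        funext pr
        have hD : Matrix.diagonal (r • c) = r • Matrix.diagonal c := by
          ext i j; by_cases hij : i = j <;> simp [Matrix.diagonal_apply, hij]
        have : Θ * Matrix.diagonal (r • c) * Θᵀ = r • (Θ * Matrix.diagonal c * Θᵀ) := by
          rw [hD, Matrix.mul_smul, Matrix.smul_mul]
        show toVec (Θ * Matrix.diagonal (r • c) * Θᵀ) pr
          = r • toVec (Θ * Matrix.diagonal c * Θᵀ) pr
        rw [this]
        simp only [toVec, Matrix.smul_apply, smul_eq_mul]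
        split_ifs <;> ring } with hSmap
  -- each Smap c lies in the kernel of Ω
  have hker : ∀ c : Fin d → ℝ, Smap c ∈ LinearMap.ker Ω.mulVecLin := by
    intro c
    rw [LinearMap.mem_ker]
    funext idx
    have hg : ∀ i j, vecPsi (W i) (W j) idx = vecPsi (W j) (W i) idx := by
      intro i j; exact vecPsi_comm _ _ _
    have step1 : Ω.mulVecLin (Smap c) idx
        = ∑ pr : {pr : Fin d × Fin d // pr.1 ≤ pr.2},
            toVec (Θ * Matrix.diagonal c * Θᵀ) pr * vecPsi (W pr.1.1) (W pr.1.2) idx := by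
      rw [Matrix.mulVecLin_apply]
      simp only [Matrix.mulVec, dotProduct]
      exact Finset.sum_congr rfl fun pr _ => by rw [hΩ idx pr, mul_comm]; rfl
    rw [step1, sum_subtype_eq _ (hsym c) _ hg]
    have expand : ∀ i j, vecPsi (W i) (W j) idx
        = ∑ a, ∑ b, Θ⁻¹ a i * Θ⁻¹ b j *
            vecPsi (Matrix.vecMulVec (u a) (v a)) (Matrix.vecMulVec (u b) (v b)) idx := by
      intro i j
      rw [hW i, hW j]
      exact vecPsi_sum _ _ _ _ idx
    have entry : ∀ (X : Matrix (Fin d) (Fin d) ℝ) a b,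
        (Θ⁻¹ * X * (Θ⁻¹)ᵀ) a b = ∑ i, ∑ j, Θ⁻¹ a i * X i j * Θ⁻¹ b j := by
      intro X a b
      simp only [Matrix.mul_apply, Matrix.transpose_apply, Finset.sum_mul]
      exact Finset.sum_comm
    calc ∑ i, ∑ j, (Θ * Matrix.diagonal c * Θᵀ) i j * vecPsi (W i) (W j) idx
        = ∑ i, ∑ j, ∑ a, ∑ b, (Θ * Matrix.diagonal c * Θᵀ) i j *
            (Θ⁻¹ a i * Θ⁻¹ b j *
              vecPsi (Matrix.vecMulVec (u a) (v a)) (Matrix.vecMulVec (u b) (v b)) idx) := by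
          refine Finset.sum_congr rfl fun i _ => Finset.sum_congr rfl fun j _ => ?_
          rw [expand i j, Finset.mul_sum]
          exact Finset.sum_congr rfl fun a _ => by rw [Finset.mul_sum]
      _ = ∑ a, ∑ b, ∑ i, ∑ j, (Θ * Matrix.diagonal c * Θᵀ) i j *
            (Θ⁻¹ a i * Θ⁻¹ b j *
              vecPsi (Matrix.vecMulVec (u a) (v a)) (Matrix.vecMulVec (u b) (v b)) idx) := by
          exact (sum_comm4 _).symm
      _ = ∑ a, ∑ b, (Θ⁻¹ * (Θ * Matrix.diagonal c * Θᵀ) * (Θ⁻¹)ᵀ) a b *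
            vecPsi (Matrix.vecMulVec (u a) (v a)) (Matrix.vecMulVec (u b) (v b)) idx := by
          refine Finset.sum_congr rfl fun a _ => Finset.sum_congr rfl fun b _ => ?_
          rw [entry, Finset.sum_mul]
          refine Finset.sum_congr rfl fun i _ => ?_
          rw [Finset.sum_mul]
          exact Finset.sum_congr rfl fun j _ => by ring
      _ = ∑ a, ∑ b, Matrix.diagonal c a b *
            vecPsi (Matrix.vecMulVec (u a) (v a)) (Matrix.vecMulVec (u b) (v b)) idx := by
          rw [hconj c]
      _ = 0 := by
          rw [show (0:ℝ) = ∑ a : Fin d, (0:ℝ) by simp]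
          refine Finset.sum_congr rfl fun a _ => ?_
          rw [show (0:ℝ) = ∑ b : Fin d, (0:ℝ) by simp]
          refine Finset.sum_congr rfl fun b _ => ?_
          by_cases hab : a = b
          · subst hab; rw [vecPsi_self, mul_zero]
          · rw [Matrix.diagonal_apply_ne _ hab, zero_mul]
  -- injectivity of Smap
  have hsymOf : ∀ c : Fin d → ℝ, symOf (Smap c) = Θ * Matrix.diagonal c * Θᵀ := by
    intro c
    exact symOf_toVec _ (hsym c)
  have hinj : Function.Injective Smap := by
    intro c c' hcc
    have h1 : Θ * Matrix.diagonal c * Θᵀ = Θ * Matrix.diagonal c' * Θᵀ := by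
      rw [← hsymOf c, ← hsymOf c', hcc]
    have h2 : Matrix.diagonal c = Matrix.diagonal c' := by
      rw [← hconj c, ← hconj c', h1]
    funext a
    have := congrFun (congrFun h2 a) a
    simpa [Matrix.diagonal_apply_eq] using this
  have hrange_le : LinearMap.range Smap ≤ LinearMap.ker Ω.mulVecLin := by
    rintro x ⟨c, rfl⟩
    exact hker c
  have hfr_range : Module.finrank ℝ (LinearMap.range Smap) = d := by
    rw [LinearMap.finrank_range_of_inj hinj, Module.finrank_fintype_fun_eq_card,
      Fintype.card_fin]
  have hfr_ker : Module.finrank ℝ (LinearMap.ker Ω.mulVecLin) = d := by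
    have hrn := LinearMap.finrank_range_add_finrank_ker Ω.mulVecLin
    have hdom : Module.finrank ℝ ({pr : Fin d × Fin d // pr.1 ≤ pr.2} → ℝ)
        = d * (d - 1) / 2 + d := by
      rw [Module.finrank_fintype_fun_eq_card, card_pairs]
    rw [hdom] at hrn
    have hrk : Module.finrank ℝ (LinearMap.range Ω.mulVecLin) = d * (d - 1) / 2 := by
      rw [← Matrix.rank]; exact hrank
    rw [hrk] at hrn
    omega
  have hrange_eq : LinearMap.range Smap = LinearMap.ker Ω.mulVecLin := by
    refine Submodule.eq_of_le_of_finrank_le hrange_le ?_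
    rw [hfr_range, hfr_ker]
  -- part (a)
  have parta : ∀ m, Matrix.IsDiag (Θ⁻¹ * symOf (h m) * (Θ⁻¹)ᵀ) := by
    intro m
    have hm : h m ∈ LinearMap.ker Ω.mulVecLin := by
      rw [← hspan]
      exact Submodule.subset_span (Set.mem_range_self m)
    rw [← hrange_eq] at hm
    obtain ⟨c, hc⟩ := hm
    rw [← hc, hsymOf c, hconj c]
    exact Matrix.isDiag_diagonal c
  refine ⟨parta, ?_⟩
  -- part (b)
  intro Θ' hΘ' hcol' hdiag'
  have hΘ'inv : Θ' * Θ'⁻¹ = 1 := Matrix.mul_nonsing_inv Θ' hΘ'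
  set A : Matrix (Fin d) (Fin d) ℝ := Θ'⁻¹ * Θ with hA
  have hAdet : IsUnit A.det := by
    rw [hA, Matrix.det_mul]
    exact (Matrix.isUnit_nonsing_inv_det Θ' hΘ').mul hΘ
  -- every conjugate A (diag c) Aᵀ is diagonal
  have key : ∀ c : Fin d → ℝ, Matrix.IsDiag (A * Matrix.diagonal c * Aᵀ) := by
    intro c
    have hmem : Smap c ∈ Submodule.span ℝ (Set.range h) := by
      rw [hspan, ← hrange_eq]
      exact ⟨c, rfl⟩
    obtain ⟨a, ha⟩ := (Submodule.mem_span_range_iff_exists_fun ℝ).mp hmem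
    have hsum : Θ * Matrix.diagonal c * Θᵀ = ∑ m, a m • symOf (h m) := by
      rw [← hsymOf c, ← ha, symOf_sum]
    have hexp : A * Matrix.diagonal c * Aᵀ
        = ∑ m, a m • (Θ'⁻¹ * symOf (h m) * (Θ'⁻¹)ᵀ) := by
      have : A * Matrix.diagonal c * Aᵀ
          = Θ'⁻¹ * (Θ * Matrix.diagonal c * Θᵀ) * (Θ'⁻¹)ᵀ := by
        rw [hA, Matrix.transpose_mul]
        simp only [Matrix.mul_assoc]
      rw [this, hsum, Matrix.mul_sum, Matrix.sum_mul]
      refine Finset.sum_congr rfl fun m _ => ?_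
      rw [Matrix.mul_smul, Matrix.smul_mul]
    intro i j hij
    rw [hexp]
    simp only [Matrix.sum_apply, Matrix.smul_apply, smul_eq_mul]
    refine Finset.sum_eq_zero fun m _ => ?_
    rw [hdiag' m hij, mul_zero]
  -- products of distinct entries within a column of A vanish
  have hprod : ∀ (ℓ : Fin d) (i j : Fin d), i ≠ j → A i ℓ * A j ℓ = 0 := by
    intro ℓ i j hij
    have hentry : (A * Matrix.diagonal (Pi.single ℓ (1:ℝ)) * Aᵀ) i j = A i ℓ * A j ℓ := by
      rw [Matrix.mul_apply]
      rw [Finset.sum_eq_single ℓ]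
      · rw [Matrix.mul_diagonal, Matrix.transpose_apply, Pi.single_eq_same, mul_one]
      · intro k _ hk
        rw [Matrix.mul_diagonal, Pi.single_eq_of_ne hk, mul_zero, zero_mul]
      · intro hk; exact absurd (Finset.mem_univ ℓ) hk
    rw [← hentry]
    exact key (Pi.single ℓ (1:ℝ)) hij
  -- each column of A has a nonzero entry
  have hcolnz : ∀ ℓ : Fin d, ∃ i, A i ℓ ≠ 0 := by
    intro ℓ
    by_contra hno
    push_neg at hno
    exact hAdet.ne_zero (Matrix.det_eq_zero_of_column_eq_zero ℓ hno)
  choose σ₀ hσ₀ using hcolnz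
  have hzero : ∀ (ℓ : Fin d) (i : Fin d), i ≠ σ₀ ℓ → A i ℓ = 0 := by
    intro ℓ i hi
    rcases mul_eq_zero.mp (hprod ℓ i (σ₀ ℓ) hi) with h0 | h0
    · exact h0
    · exact absurd h0 (hσ₀ ℓ)
  have hmvinj : Function.Injective A.mulVec := Matrix.mulVec_injective_iff_isUnit.mpr ((Matrix.isUnit_iff_isUnit_det A).mpr hAdet)
  have hσinj : Function.Injective σ₀ := by
    intro ℓ ℓ' hll
    by_contra hne
    have hmv : A.mulVec (Pi.single ℓ (A (σ₀ ℓ) ℓ') + Pi.single ℓ' (-(A (σ₀ ℓ) ℓ)))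
        = A.mulVec 0 := by
      funext i
      rw [Matrix.mulVec_zero, Matrix.mulVec_add, Matrix.mulVec_single, Matrix.mulVec_single]
      show A i ℓ * A (σ₀ ℓ) ℓ' + A i ℓ' * (-(A (σ₀ ℓ) ℓ)) = 0
      by_cases hir : i = σ₀ ℓ
      · subst hir; ring
      · rw [hzero ℓ i hir, hzero ℓ' i (by rw [← hll]; exact hir), zero_mul, zero_mul,
          add_zero]
    have hx0 := hmvinj hmv
    have hval : ((Pi.single ℓ (A (σ₀ ℓ) ℓ') + Pi.single ℓ' (-(A (σ₀ ℓ) ℓ)) : Fin d → ℝ)) ℓ'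
        = 0 := by
      rw [hx0]; rfl
    simp only [Pi.add_apply, Pi.single_eq_same, Pi.single_eq_of_ne (Ne.symm hne)] at hval
    exact (hσ₀ ℓ) (by linarith)
  have hσbij : Function.Bijective σ₀ := (Finite.injective_iff_bijective).mp hσinj
  set σ : Equiv.Perm (Fin d) := Equiv.ofBijective σ₀ hσbij with hσdef
  set κ : Fin d → ℝ := fun ℓ => A (σ₀ ℓ) ℓ with hκ
  have hΘA : Θ = Θ' * A := by
    rw [hA, ← Matrix.mul_assoc, hΘ'inv, Matrix.one_mul]
  have hΘentry : ∀ (ℓ : Fin d) (i : Fin d), Θ i ℓ = Θ' i (σ₀ ℓ) * κ ℓ := by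
    intro ℓ i
    have : Θ i ℓ = ∑ k, Θ' i k * A k ℓ := by
      rw [hΘA, Matrix.mul_apply]
    rw [this, Finset.sum_eq_single (σ₀ ℓ)
      (fun k _ hk => by rw [hzero ℓ k hk, mul_zero])
      (fun hk => absurd (Finset.mem_univ _) hk)]
  have hκ2 : ∀ ℓ, κ ℓ * κ ℓ = 1 := by
    intro ℓ
    have h1 : (1:ℝ) = ∑ i, (Θ' i (σ₀ ℓ) * κ ℓ) ^ 2 := by
      rw [← hΘcol ℓ]
      exact Finset.sum_congr rfl fun i _ => by rw [hΘentry ℓ i]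
    have h2 : ∑ i, (Θ' i (σ₀ ℓ) * κ ℓ) ^ 2 = (∑ i, Θ' i (σ₀ ℓ) ^ 2) * (κ ℓ * κ ℓ) := by
      rw [Finset.sum_mul]
      exact Finset.sum_congr rfl fun i _ => by ring
    rw [h2, hcol' (σ₀ ℓ), one_mul] at h1
    exact h1.symm
  have hsign : ∀ ℓ, κ ℓ = 1 ∨ κ ℓ = -1 := fun ℓ => mul_self_eq_one_iff.mp (hκ2 ℓ)
  refine ⟨σ, κ, hsign, ?_⟩
  intro ℓ i
  have hσℓ : σ ℓ = σ₀ ℓ := rfl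
  rw [hσℓ, hΘentry ℓ i]
  rcases hsign ℓ with hs | hs <;> rw [hs] <;> ring
end
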